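/- arXiv:2307.04177 — 10 statements merged into one kernel-verified Lean document; each statement's English description precedes it below -/
import Mathlib

section
/- Let {·,·} be a Jacobi bracket on a commutative ring A, and for h ∈ A let X_h : A → A be the symbol X_h (f) = {f, h} − f * {1, h}. Then for all h₁, h₂, f ∈ A one has X_{h₁} (X_{h₂} f) − X_{h₂} (X_{h₁} f) = − X_{{h₁, h₂}} f; that is, the commutator of the symbols equals minus the symbol of the bracket (part (d) of Theorem 3.3 of the paper, in the case of a trivial line bundle). -/
/-- The symbol `X_h` of the derivation `[·, h]` associated with a bracket:
`X_h f = {f, h} - f * {1, h}`. -/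
def jacobiSymbol {A : Type*} [CommRing A] (bracket : A → A → A) (h f : A) : A :=
  bracket f h - f * bracket 1 h

/-- For a Jacobi bracket on a commutative ring `A`, the commutator of
the symbols equals minus the symbol of the bracket:
`X_{h₁} ∘ X_{h₂} - X_{h₂} ∘ X_{h₁} = - X_{{h₁, h₂}}`. -/
theorem jacobiSymbol_commutator {A : Type*} [CommRing A]
    (bracket : A → A → A)
    (hadd₁ : ∀ f g h : A, bracket (f + g) h = bracket f h + bracket g h)
    (hadd₂ : ∀ f g h : A, bracket f (g + h) = bracket f g + bracket f h)
    (halt : ∀ f : A, bracket f f = 0)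
    (hjac : ∀ f g h : A,
      bracket (bracket f g) h + bracket (bracket g h) f + bracket (bracket h f) g = 0)
    (hleib : ∀ f g h : A,
      bracket (f * g) h = f * bracket g h + g * bracket f h - f * g * bracket 1 h) :
    ∀ h₁ h₂ f : A,
      jacobiSymbol bracket h₁ (jacobiSymbol bracket h₂ f)
        - jacobiSymbol bracket h₂ (jacobiSymbol bracket h₁ f)
        = - jacobiSymbol bracket (bracket h₁ h₂) f := by
  -- antisymmetry
  have hanti : ∀ f g : A, bracket f g = - bracket g f := by
    intro f g
    have h0 := halt (f + g)
    rw [hadd₁, hadd₂, hadd₂, halt, halt] at h0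
    linear_combination h0
  -- negation in the first argument
  have hzero : ∀ h : A, bracket 0 h = 0 := by
    intro h
    have := hadd₁ 0 0 h
    simpa using this
  have hneg₁ : ∀ f h : A, bracket (-f) h = - bracket f h := by
    intro f h
    have := hadd₁ f (-f) h
    simp [hzero] at this
    linear_combination -this
  have hsub₁ : ∀ f g h : A, bracket (f - g) h = bracket f h - bracket g h := by
    intro f g h
    rw [sub_eq_add_neg, hadd₁, hneg₁]; ring
  intro h₁ h₂ f
  have E1 : bracket (bracket h₁ f) h₂ = - bracket (bracket f h₁) h₂ := by
    rw [hanti h₁ f, hneg₁]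
  have E2 : bracket (bracket h₂ h₁) f = - bracket (bracket h₁ h₂) f := by
    rw [hanti h₂ h₁, hneg₁]
  have E3 : bracket (bracket h₁ 1) h₂ = - bracket (bracket 1 h₁) h₂ := by
    rw [hanti h₁ 1, hneg₁]
  have E4 : bracket (bracket h₂ h₁) 1 = - bracket (bracket h₁ h₂) 1 := by
    rw [hanti h₂ h₁, hneg₁]
  have E5 : bracket f (bracket h₁ h₂) = - bracket (bracket h₁ h₂) f := hanti _ _
  have E6 : bracket 1 (bracket h₁ h₂) = - bracket (bracket h₁ h₂) 1 := hanti _ _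
  simp only [jacobiSymbol]
  rw [hsub₁, hsub₁, hleib, hleib, E5, E6]
  linear_combination (hjac f h₂ h₁) - E2 - E1 - f * (hjac 1 h₂ h₁) + f * E4 + f * E3
end

section
/- For every s ∈ ℝ, every differentiable F, G : E × E → ℝ and every (q, p) ∈ E × E, the canonical Poisson bracket satisfies {F ∘ φ_s, G ∘ φ_s}(q, p) = s * {F, G}(q, s • p); i.e. the canonical Poisson structure of the cotangent bundle is homogeneous of degree one with respect to fiberwise scaling (equation (Ps2) of the paper in canonical coordinates). -/
noncomputable section

/-- The `i`-th standard basis vector of `EuclideanSpace ℝ (Fin n)`. -/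
def stdBasis (n : ℕ) (i : Fin n) : EuclideanSpace ℝ (Fin n) :=
  EuclideanSpace.single i (1 : ℝ)

/-- The canonical Poisson bracket of two functions on the phase space
`E × E`, `E = EuclideanSpace ℝ (Fin n)`, in canonical coordinates. -/
def poissonBracket {n : ℕ}
    (F G : EuclideanSpace ℝ (Fin n) × EuclideanSpace ℝ (Fin n) → ℝ)
    (x : EuclideanSpace ℝ (Fin n) × EuclideanSpace ℝ (Fin n)) : ℝ :=
  ∑ i : Fin n,
    (fderiv ℝ F x (stdBasis n i, 0) * fderiv ℝ G x (0, stdBasis n i)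
      - fderiv ℝ F x (0, stdBasis n i) * fderiv ℝ G x (stdBasis n i, 0))

/-- The canonical Poisson structure of the cotangent bundle is
homogeneous of degree one with respect to fiberwise scaling:
`{F ∘ φ_s, G ∘ φ_s}(q, p) = s * {F, G}(q, s • p)`. -/
theorem poissonBracket_fiberwise_scaling {n : ℕ} (s : ℝ)
    (F G : EuclideanSpace ℝ (Fin n) × EuclideanSpace ℝ (Fin n) → ℝ)
    (hF : Differentiable ℝ F) (hG : Differentiable ℝ G)
    (q p : EuclideanSpace ℝ (Fin n)) :
    poissonBracket (fun z => F (z.1, s • z.2)) (fun z => G (z.1, s • z.2)) (q, p)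
      = s * poissonBracket F G (q, s • p) := by
  let E := EuclideanSpace ℝ (Fin n)
  set L : (E × E) →L[ℝ] (E × E) :=
    (ContinuousLinearMap.fst ℝ E E).prod (s • ContinuousLinearMap.snd ℝ E E) with hLdef
  have hLapp : ∀ z : E × E, L z = (z.1, s • z.2) := fun z => rfl
  have key : ∀ (H : E × E → ℝ), Differentiable ℝ H → ∀ x : E × E,
      fderiv ℝ (fun z : E × E => H (z.1, s • z.2)) x = (fderiv ℝ H (L x)).comp L := by
    intro H hH x
    have : (fun z : E × E => H (z.1, s • z.2)) = H ∘ L := rfl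
    rw [this, fderiv_comp x (hH _) L.differentiableAt, L.fderiv]
  unfold poissonBracket
  rw [key F hF, key G hG, Finset.mul_sum]
  apply Finset.sum_congr rfl
  intro i _
  have h1 : L (stdBasis n i, 0) = (stdBasis n i, (0 : E)) := by
    rw [hLapp]; simp
  have h2 : L (0, stdBasis n i) = s • ((0 : E), stdBasis n i) := by
    rw [hLapp]; simp [Prod.smul_mk]
  simp only [ContinuousLinearMap.comp_apply, h1, h2, hLapp, map_smul, smul_eq_mul]
  ring
end
end

section
/- Let F, G : E × E → ℝ be differentiable and homogeneous of degree one in the fibers, i.e. F(q, s • p) = s * F(q, p) and G(q, s • p) = s * G(q, p) for all nonzero s ∈ ℝ and all (q, p). Then their canonical Poisson bracket is again homogeneous: {F, G}(q, s • p) = s * {F, G}(q, p) for all nonzero s ∈ ℝ and all (q, p). (This is the closure of homogeneous functions under the Poisson bracket used in the proof of Theorem 3.3 of the paper, in canonical coordinates.) -/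
noncomputable section

lemma key_deriv {n : ℕ}
    (F : EuclideanSpace ℝ (Fin n) × EuclideanSpace ℝ (Fin n) → ℝ)
    (hF : Differentiable ℝ F)
    (hFhom : ∀ s : ℝ, s ≠ 0 → ∀ q p : EuclideanSpace ℝ (Fin n),
      F (q, s • p) = s * F (q, p))
    (s : ℝ) (hs : s ≠ 0) (q p : EuclideanSpace ℝ (Fin n))
    (v : EuclideanSpace ℝ (Fin n) × EuclideanSpace ℝ (Fin n)) :
    fderiv ℝ F (q, s • p) (v.1, s • v.2) = s * fderiv ℝ F (q, p) v := by
  let Ty := EuclideanSpace ℝ (Fin n)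
  let T : Ty × Ty →L[ℝ] Ty × Ty :=
    (ContinuousLinearMap.fst ℝ Ty Ty).prod (s • ContinuousLinearMap.snd ℝ Ty Ty)
  have hTapp : ∀ x : Ty × Ty, T x = (x.1, s • x.2) := fun x => rfl
  have hcomp : (F ∘ T) = fun x => s * F x := by
    funext x
    show F (T x) = _
    rw [hTapp]
    exact hFhom s hs x.1 x.2
  have h1 : fderiv ℝ (F ∘ T) (q, p) = (fderiv ℝ F (T (q, p))).comp T := by
    rw [fderiv_comp _ (hF _) T.differentiableAt, T.fderiv]
  have h2 : fderiv ℝ (fun x : Ty × Ty => s * F x) (q, p) = s • fderiv ℝ F (q, p) :=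
    fderiv_const_mul (hF _) s
  have h3 := h1.symm.trans (hcomp ▸ h2)
  have h4 := congrFun (congrArg (fun L : Ty × Ty →L[ℝ] ℝ => (L : Ty × Ty → ℝ)) h3) v
  simpa [hTapp] using h4

/-- The canonical Poisson bracket of two fiberwise-homogeneous
functions of degree one is again homogeneous of degree one in the fibers. -/
theorem poissonBracket_of_homogeneous_is_homogeneous {n : ℕ}
    (F G : EuclideanSpace ℝ (Fin n) × EuclideanSpace ℝ (Fin n) → ℝ)
    (hF : Differentiable ℝ F) (hG : Differentiable ℝ G)
    (hFhom : ∀ s : ℝ, s ≠ 0 → ∀ q p : EuclideanSpace ℝ (Fin n),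
      F (q, s • p) = s * F (q, p))
    (hGhom : ∀ s : ℝ, s ≠ 0 → ∀ q p : EuclideanSpace ℝ (Fin n),
      G (q, s • p) = s * G (q, p)) :
    ∀ s : ℝ, s ≠ 0 → ∀ q p : EuclideanSpace ℝ (Fin n),
      poissonBracket F G (q, s • p) = s * poissonBracket F G (q, p) := by
  intro s hs q p
  have keyF := key_deriv F hF hFhom s hs q p
  have keyG := key_deriv G hG hGhom s hs q p
  have hq : ∀ (H : EuclideanSpace ℝ (Fin n) × EuclideanSpace ℝ (Fin n) → ℝ)
      (hH : Differentiable ℝ H)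
      (hHhom : ∀ s : ℝ, s ≠ 0 → ∀ q p : EuclideanSpace ℝ (Fin n),
        H (q, s • p) = s * H (q, p)) (i : Fin n),
      fderiv ℝ H (q, s • p) (stdBasis n i, 0) = s * fderiv ℝ H (q, p) (stdBasis n i, 0) := by
    intro H hH hHhom i
    have := key_deriv H hH hHhom s hs q p (stdBasis n i, 0)
    simpa using this
  have hp : ∀ (H : EuclideanSpace ℝ (Fin n) × EuclideanSpace ℝ (Fin n) → ℝ)
      (hH : Differentiable ℝ H)
      (hHhom : ∀ s : ℝ, s ≠ 0 → ∀ q p : EuclideanSpace ℝ (Fin n),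
        H (q, s • p) = s * H (q, p)) (i : Fin n),
      fderiv ℝ H (q, s • p) (0, stdBasis n i) = fderiv ℝ H (q, p) (0, stdBasis n i) := by
    intro H hH hHhom i
    have := key_deriv H hH hHhom s hs q p (0, stdBasis n i)
    simp only at this
    have h2 : fderiv ℝ H (q, s • p) (0, s • stdBasis n i)
        = s * fderiv ℝ H (q, s • p) (0, stdBasis n i) := by
      have : ((0 : EuclideanSpace ℝ (Fin n)), s • stdBasis n i)
          = s • ((0 : EuclideanSpace ℝ (Fin n)), stdBasis n i) := by
        simp [Prod.smul_mk]
      rw [this, map_smul]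
      rfl
    rw [h2] at this
    exact mul_left_cancel₀ hs this
  unfold poissonBracket
  rw [Finset.mul_sum]
  apply Finset.sum_congr rfl
  intro i _
  rw [hq F hF hFhom i, hp F hF hFhom i, hq G hG hGhom i, hp G hG hGhom i]
  ring
end
end

section
/- Let F : E × E → ℝ be differentiable and satisfy F(q, s • p) = s * F(q, p) for all nonzero s ∈ ℝ and all (q, p), and define the Hamiltonian vector field X_F (q, p) = (∑ i, fderiv ℝ F (q,p) (0, e i) • e i, − ∑ i, fderiv ℝ F (q,p) (e i, 0) • e i) ∈ E × E. Then for every nonzero s ∈ ℝ and every (q, p), X_F (q, s • p) = ((X_F (q, p)).1, s • (X_F (q, p)).2); i.e. the Hamiltonian vector field of a homogeneous function is equivariant under the fiberwise scaling, hence projectable to the quotient (the key step of part (c) of the proof of Theorem 3.3 of the paper, in canonical coordinates). -/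
noncomputable section

/-- The Hamiltonian vector field `X_F = (∂F/∂p, −∂F/∂q)` of a function `F` on the
phase space `E × E`, `E = EuclideanSpace ℝ (Fin n)`, in canonical coordinates. -/
def hamVF {n : ℕ}
    (F : EuclideanSpace ℝ (Fin n) × EuclideanSpace ℝ (Fin n) → ℝ)
    (x : EuclideanSpace ℝ (Fin n) × EuclideanSpace ℝ (Fin n)) :
    EuclideanSpace ℝ (Fin n) × EuclideanSpace ℝ (Fin n) :=
  (∑ i : Fin n, fderiv ℝ F x (0, stdBasis n i) • stdBasis n i,
    - ∑ i : Fin n, fderiv ℝ F x (stdBasis n i, 0) • stdBasis n i)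

lemma fderiv_scaled {n : ℕ}
    (F : EuclideanSpace ℝ (Fin n) × EuclideanSpace ℝ (Fin n) → ℝ)
    (hF : Differentiable ℝ F)
    (hFhom : ∀ s : ℝ, s ≠ 0 → ∀ q p : EuclideanSpace ℝ (Fin n),
      F (q, s • p) = s * F (q, p))
    (s : ℝ) (hs : s ≠ 0) (q p : EuclideanSpace ℝ (Fin n))
    (v w : EuclideanSpace ℝ (Fin n)) :
    fderiv ℝ F (q, s • p) (v, s • w) = s * fderiv ℝ F (q, p) (v, w) := by
  let E := EuclideanSpace ℝ (Fin n)
  let L : (EuclideanSpace ℝ (Fin n) × EuclideanSpace ℝ (Fin n)) →L[ℝ]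
      (EuclideanSpace ℝ (Fin n) × EuclideanSpace ℝ (Fin n)) :=
    (ContinuousLinearMap.id ℝ _).prodMap (s • ContinuousLinearMap.id ℝ _)
  have hLapp : ∀ x : EuclideanSpace ℝ (Fin n) × EuclideanSpace ℝ (Fin n),
      L x = (x.1, s • x.2) := fun x => rfl
  have hcomp : (fun x : EuclideanSpace ℝ (Fin n) × EuclideanSpace ℝ (Fin n) => F (L x)) = fun x => s * F x := by
    funext x
    rw [hLapp]
    exact hFhom s hs x.1 x.2
  have h1 : fderiv ℝ (fun x : EuclideanSpace ℝ (Fin n) × EuclideanSpace ℝ (Fin n) => F (L x)) (q, p) =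
      (fderiv ℝ F (L (q, p))).comp L := by
    have := fderiv_comp (q, p) (hF (L (q, p))) L.differentiableAt
    simpa [L.fderiv, Function.comp_def] using this
  have h2 : fderiv ℝ (fun x : EuclideanSpace ℝ (Fin n) × EuclideanSpace ℝ (Fin n) => s * F x) (q, p) = s • fderiv ℝ F (q, p) :=
    fderiv_const_mul (hF (q, p)) s
  have h3 : (fderiv ℝ F (L (q, p))).comp L = s • fderiv ℝ F (q, p) := by
    rw [← h1, hcomp, h2]
  have := congrArg (fun T : (EuclideanSpace ℝ (Fin n) × EuclideanSpace ℝ (Fin n)) →L[ℝ] ℝ => T (v, w)) h3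
  simpa [hLapp] using this

/-- The Hamiltonian vector field of a fiberwise-homogeneous function
of degree one is equivariant under the fiberwise scaling `φ_s(q, p) = (q, s • p)`. -/
theorem hamVF_of_homogeneous_equivariant {n : ℕ}
    (F : EuclideanSpace ℝ (Fin n) × EuclideanSpace ℝ (Fin n) → ℝ)
    (hF : Differentiable ℝ F)
    (hFhom : ∀ s : ℝ, s ≠ 0 → ∀ q p : EuclideanSpace ℝ (Fin n),
      F (q, s • p) = s * F (q, p)) :
    ∀ s : ℝ, s ≠ 0 → ∀ q p : EuclideanSpace ℝ (Fin n),
      hamVF F (q, s • p) = ((hamVF F (q, p)).1, s • (hamVF F (q, p)).2) := by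
  intro s hs q p
  have key := fderiv_scaled F hF hFhom s hs q p
  have hp : ∀ i : Fin n, fderiv ℝ F (q, s • p) (0, stdBasis n i) =
      fderiv ℝ F (q, p) (0, stdBasis n i) := by
    intro i
    have := key 0 (s⁻¹ • stdBasis n i)
    rw [smul_smul, mul_inv_cancel₀ hs, one_smul] at this
    rw [this]
    have : fderiv ℝ F (q, p) ((0 : EuclideanSpace ℝ (Fin n)), s⁻¹ • stdBasis n i)
        = s⁻¹ * fderiv ℝ F (q, p) (0, stdBasis n i) := by
      have : ((0 : EuclideanSpace ℝ (Fin n)), s⁻¹ • stdBasis n i)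
          = s⁻¹ • ((0 : EuclideanSpace ℝ (Fin n)), stdBasis n i) := by
        simp [Prod.smul_def]
      rw [this, map_smul]
      simp
    rw [this, ← mul_assoc, mul_inv_cancel₀ hs, one_mul]
  have hq : ∀ i : Fin n, fderiv ℝ F (q, s • p) (stdBasis n i, 0) =
      s * fderiv ℝ F (q, p) (stdBasis n i, 0) := by
    intro i
    have := key (stdBasis n i) 0
    simpa using this
  simp only [hamVF]
  refine Prod.ext ?_ ?_
  · simp [hp]
  · simp only [Prod.snd, smul_neg, Finset.smul_sum]
    congr 1
    refine Finset.sum_congr rfl fun i _ => ?_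
    rw [hq, mul_smul]
end
end

section
/- Let Y : E → E be a differentiable vector field, Y^ℓ(q, p) = ⟪p, Y q⟫ its momentum function, and define X(q, p) = (Y q, − (ContinuousLinearMap.adjoint (fderiv ℝ Y q)) p) ∈ E × E. Then for every (q, p) and every v = (v₁, v₂) ∈ E × E one has ω(X(q, p), v) = fderiv ℝ Y^ℓ (q, p) v, where ω((a, b), (c, d)) = ⟪a, d⟫ − ⟪b, c⟫ is the canonical symplectic pairing; i.e. X is the Hamiltonian vector field of the fiberwise-linear function Y^ℓ with respect to the canonical symplectic structure (the explicit expression X_{Y^ℓ} = Y^k ∂_{q^k} − p_j ∂_{q^k}Y^j ∂_{p_k} of Example 3.4 of the paper). -/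
open scoped RealInnerProductSpace

noncomputable section

/-- The canonical symplectic pairing `ω((a,b),(c,d)) = ⟪a, d⟫ − ⟪b, c⟫` on `E × E`. -/
def canSymp {n : ℕ}
    (u v : EuclideanSpace ℝ (Fin n) × EuclideanSpace ℝ (Fin n)) : ℝ :=
  ⟪u.1, v.2⟫ - ⟪u.2, v.1⟫

/-- The vector field
`X(q, p) = (Y q, − (DY q)* p)` is the Hamiltonian vector field of the
fiberwise-linear momentum function `Y^ℓ(q,p) = ⟪p, Y q⟫` with respect to the canonical
symplectic pairing: `ω(X(q,p), v) = d(Y^ℓ)(q,p)(v)` for all `v`. -/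
theorem hamVF_of_momentum_function {n : ℕ}
    (Y : EuclideanSpace ℝ (Fin n) → EuclideanSpace ℝ (Fin n))
    (hY : Differentiable ℝ Y)
    (X : EuclideanSpace ℝ (Fin n) × EuclideanSpace ℝ (Fin n) →
      EuclideanSpace ℝ (Fin n) × EuclideanSpace ℝ (Fin n))
    (hX : ∀ q p : EuclideanSpace ℝ (Fin n),
      X (q, p) = (Y q, - (ContinuousLinearMap.adjoint (fderiv ℝ Y q)) p)) :
    ∀ q p : EuclideanSpace ℝ (Fin n),
      ∀ v : EuclideanSpace ℝ (Fin n) × EuclideanSpace ℝ (Fin n),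
        canSymp (X (q, p)) v = fderiv ℝ (fun z => ⟪z.2, Y z.1⟫) (q, p) v := by
  intro q p v
  have h1 : HasFDerivAt (fun z : EuclideanSpace ℝ (Fin n) × EuclideanSpace ℝ (Fin n) => Y z.1)
      ((fderiv ℝ Y q).comp (ContinuousLinearMap.fst ℝ _ _)) (q, p) :=
    (hY q).hasFDerivAt.comp (q, p) (hasFDerivAt_fst)
  have h2 : HasFDerivAt (fun z : EuclideanSpace ℝ (Fin n) × EuclideanSpace ℝ (Fin n) => z.2)
      (ContinuousLinearMap.snd ℝ _ _) (q, p) := hasFDerivAt_snd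
  have h := (h2.inner ℝ h1).fderiv
  rw [h]
  simp [canSymp, hX, fderivInnerCLM, real_inner_comm p,
    ContinuousLinearMap.adjoint_inner_left, inner_neg_left]
  rw [add_comm]
  congr 1
  exact Finset.sum_congr rfl fun i _ => mul_comm _ _
end
end

section
/- Let Y : E → E be differentiable, let i₀ : Fin n, and on the open set where p i₀ ≠ 0 define the projective chart map P(q, p) = (q, (p i₀)⁻¹ • p) and the Hamiltonian vector field X(q, p) = (Y q, − (ContinuousLinearMap.adjoint (fderiv ℝ Y q)) p) of the momentum function Y^ℓ(q,p) = ⟪p, Y q⟫. Then for every (q, p) with p i₀ ≠ 0, fderiv ℝ P (q, p) (X (q, p)) = (Y q, w), where, writing p̃ = (p i₀)⁻¹ • p and ∂ᵢY^j(q) = ⟪fderiv ℝ Y q (e i), e j⟫, the vector w ∈ E has components w i = ∑ j, p̃ j * (p̃ i * ∂_{i₀}Y^j(q) − ∂ᵢY^j(q)). In other words, the Hamiltonian vector field of Y^ℓ projects under the scaling quotient to the reduced vector field on the projective cotangent bundle computed in Example 3.4 of the paper. -/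
open scoped RealInnerProductSpace

noncomputable section

/-- On the chart `{p i₀ ≠ 0}` of the scaling quotient, realized by the
normalization map `P(q, p) = (q, (p i₀)⁻¹ • p)`, the Hamiltonian vector field
`X(q, p) = (Y q, − (DY q)* p)` of the momentum function `Y^ℓ(q,p) = ⟪p, Y q⟫` projects
to the reduced vector field on the projective cotangent bundle whose components are
`(Y q, w)` with `w i = ∑ j, p̃ j * (p̃ i * ∂_{i₀}Y^j(q) − ∂ᵢY^j(q))`, `p̃ = (p i₀)⁻¹ • p`. -/
theorem hamVF_momentum_projects_to_projective_chart {n : ℕ} (i₀ : Fin n)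
    (Y : EuclideanSpace ℝ (Fin n) → EuclideanSpace ℝ (Fin n))
    (hY : Differentiable ℝ Y)
    (P : EuclideanSpace ℝ (Fin n) × EuclideanSpace ℝ (Fin n) →
      EuclideanSpace ℝ (Fin n) × EuclideanSpace ℝ (Fin n))
    (hP : ∀ z : EuclideanSpace ℝ (Fin n) × EuclideanSpace ℝ (Fin n),
      P z = (z.1, (z.2 i₀)⁻¹ • z.2))
    (X : EuclideanSpace ℝ (Fin n) × EuclideanSpace ℝ (Fin n) →
      EuclideanSpace ℝ (Fin n) × EuclideanSpace ℝ (Fin n))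
    (hX : ∀ q p : EuclideanSpace ℝ (Fin n),
      X (q, p) = (Y q, - (ContinuousLinearMap.adjoint (fderiv ℝ Y q)) p)) :
    ∀ q p : EuclideanSpace ℝ (Fin n), p i₀ ≠ 0 →
      (fderiv ℝ P (q, p) (X (q, p))).1 = Y q ∧
      ∀ i : Fin n,
        (fderiv ℝ P (q, p) (X (q, p))).2 i
          = ∑ j : Fin n, ((p i₀)⁻¹ • p) j *
              (((p i₀)⁻¹ • p) i * ⟪fderiv ℝ Y q (stdBasis n i₀), stdBasis n j⟫
                - ⟪fderiv ℝ Y q (stdBasis n i), stdBasis n j⟫) := by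
  intro q p hp
  let E := EuclideanSpace ℝ (Fin n)
  have hPe : P = fun z : E × E => (z.1, (z.2 i₀)⁻¹ • z.2) := funext hP
  -- derivative of the normalization map on the fiber
  have hproj : HasFDerivAt (fun v : E => v i₀) (EuclideanSpace.proj i₀ : E →L[ℝ] ℝ) p :=
    (EuclideanSpace.proj i₀ : E →L[ℝ] ℝ).hasFDerivAt
  have hc : HasFDerivAt (fun v : E => (v i₀)⁻¹)
      ((-(p i₀ ^ 2)⁻¹) • (EuclideanSpace.proj i₀ : E →L[ℝ] ℝ)) p :=
    (hasDerivAt_inv hp).comp_hasFDerivAt p hproj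
  have hg : HasFDerivAt (fun v : E => (v i₀)⁻¹ • v)
      ((p i₀)⁻¹ • ContinuousLinearMap.id ℝ E +
        ((-(p i₀ ^ 2)⁻¹) • (EuclideanSpace.proj i₀ : E →L[ℝ] ℝ)).smulRight p) p :=
    hc.smul (hasFDerivAt_id p)
  have hPd : HasFDerivAt P
      ((ContinuousLinearMap.fst ℝ E E).prod
        (((p i₀)⁻¹ • ContinuousLinearMap.id ℝ E +
          ((-(p i₀ ^ 2)⁻¹) • (EuclideanSpace.proj i₀ : E →L[ℝ] ℝ)).smulRight p).comp
          (ContinuousLinearMap.snd ℝ E E))) (q, p) := by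
    rw [hPe]
    exact HasFDerivAt.prodMk hasFDerivAt_fst (HasFDerivAt.comp (q, p) (f := Prod.snd) hg hasFDerivAt_snd)
  rw [hPd.fderiv, hX]
  constructor
  · simp
  · intro i
    have key : ∀ k : Fin n, (ContinuousLinearMap.adjoint (fderiv ℝ Y q)) p k
        = ∑ j : Fin n, p j * ⟪fderiv ℝ Y q (stdBasis n k), stdBasis n j⟫ := by
      intro k
      have h1 : (ContinuousLinearMap.adjoint (fderiv ℝ Y q)) p k
          = ⟪(ContinuousLinearMap.adjoint (fderiv ℝ Y q)) p, stdBasis n k⟫ := by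
        simp [stdBasis, EuclideanSpace.inner_single_right]
      rw [h1, ContinuousLinearMap.adjoint_inner_left]
      simp [PiLp.inner_apply, stdBasis, EuclideanSpace.inner_single_right]
      exact Finset.sum_congr rfl (fun x _ => mul_comm _ _)
    simp only [ContinuousLinearMap.prod_apply, ContinuousLinearMap.coe_comp',
      Function.comp_apply, ContinuousLinearMap.coe_snd', ContinuousLinearMap.add_apply,
      ContinuousLinearMap.coe_smul', Pi.smul_apply, ContinuousLinearMap.coe_id', id_eq,
      ContinuousLinearMap.smulRight_apply, PiLp.proj_apply, smul_eq_mul]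
    have happ : ((p i₀)⁻¹ • -(ContinuousLinearMap.adjoint (fderiv ℝ Y q)) p +
        ((-(p i₀ ^ 2)⁻¹) * (-(ContinuousLinearMap.adjoint (fderiv ℝ Y q)) p i₀)) • p) i
        = (p i₀)⁻¹ * (-(ContinuousLinearMap.adjoint (fderiv ℝ Y q) p i)) +
          ((-(p i₀ ^ 2)⁻¹) * (-(ContinuousLinearMap.adjoint (fderiv ℝ Y q) p i₀))) * p i := by
      simp [PiLp.add_apply, PiLp.smul_apply, smul_eq_mul]
    rw [show (EuclideanSpace.proj i₀) (-(ContinuousLinearMap.adjoint (fderiv ℝ Y q)) p)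
        = -(ContinuousLinearMap.adjoint (fderiv ℝ Y q) p i₀) from by simp]
    rw [happ, key i, key i₀]
    have hexp : ∀ j : Fin n,
        ((p i₀)⁻¹ • p) j * (((p i₀)⁻¹ • p) i * ⟪fderiv ℝ Y q (stdBasis n i₀), stdBasis n j⟫
          - ⟪fderiv ℝ Y q (stdBasis n i), stdBasis n j⟫)
        = ((p i₀)⁻¹ * ((p i₀)⁻¹ * p i)) * (p j * ⟪fderiv ℝ Y q (stdBasis n i₀), stdBasis n j⟫)
          - (p i₀)⁻¹ * (p j * ⟪fderiv ℝ Y q (stdBasis n i), stdBasis n j⟫) := by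
      intro j
      simp only [PiLp.smul_apply, smul_eq_mul]
      ring
    rw [Finset.sum_congr rfl (fun j _ => hexp j), Finset.sum_sub_distrib,
      ← Finset.mul_sum, ← Finset.mul_sum]
    field_simp
    ring
end
end

section
/- For all (r, θ, r', θ') ∈ ℝ⁴ with r > 0 and r' > 0, one has fderiv ℝ P (r, θ, r', θ') (X (r, θ, r', θ')) = X₁ (P (r, θ, r', θ')), where P(r, θ, r', θ') = (r'/r, θ, θ') is the quotient map of the scaling symmetry and X₁(ρ', θ, θ') = ((1 + ρ'²) * cos(θ − θ'), ρ' * sin(θ − θ'), sin(θ − θ') / ρ'). That is, the Hamiltonian vector field of the 2d harmonic oscillator projects under the scaling reduction to the contact Hamiltonian vector field of equation (p1) of the paper. -/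
open Real

noncomputable section

/-- The Hamiltonian vector field of the 2d harmonic oscillator `H = (r² + r'²)/2` in
polar coordinates `(r, θ, r', θ')` on the punctured phase space. -/
def hoVF (x : ℝ × ℝ × ℝ × ℝ) : ℝ × ℝ × ℝ × ℝ :=
  (-(x.2.2.1) * cos (x.2.1 - x.2.2.2),
    (x.2.2.1 / x.1) * sin (x.2.1 - x.2.2.2),
    x.1 * cos (x.2.1 - x.2.2.2),
    (x.1 / x.2.2.1) * sin (x.2.1 - x.2.2.2))

/-- The quotient map of the scaling symmetry: `P(r, θ, r', θ') = (r'/r, θ, θ')`. -/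
def scalingQuot (x : ℝ × ℝ × ℝ × ℝ) : ℝ × ℝ × ℝ :=
  (x.2.2.1 / x.1, x.2.1, x.2.2.2)

/-- The reduced contact Hamiltonian vector field
`X₁(ρ', θ, θ') = ((1 + ρ'²) cos(θ − θ'), ρ' sin(θ − θ'), sin(θ − θ')/ρ')`. -/
def contactVF (y : ℝ × ℝ × ℝ) : ℝ × ℝ × ℝ :=
  ((1 + y.1 ^ 2) * cos (y.2.1 - y.2.2), y.1 * sin (y.2.1 - y.2.2),
    sin (y.2.1 - y.2.2) / y.1)

/-- The Hamiltonian vector field of the 2d harmonic oscillator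
projects, under the scaling reduction `P(r, θ, r', θ') = (r'/r, θ, θ')`, to the contact
Hamiltonian vector field `X₁` of equation (p1) of the paper. -/
theorem harmonic_oscillator_scaling_reduction (r θ r' θ' : ℝ)
    (hr : 0 < r) (hr' : 0 < r') :
    fderiv ℝ scalingQuot (r, θ, r', θ') (hoVF (r, θ, r', θ'))
      = contactVF (scalingQuot (r, θ, r', θ')) := by
  set p : ℝ × ℝ × ℝ × ℝ := (r, θ, r', θ')
  -- projections as continuous linear maps
  set L1 : (ℝ × ℝ × ℝ × ℝ) →L[ℝ] ℝ := ContinuousLinearMap.fst ℝ ℝ (ℝ × ℝ × ℝ)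
  set L2 : (ℝ × ℝ × ℝ × ℝ) →L[ℝ] ℝ :=
    (ContinuousLinearMap.fst ℝ ℝ (ℝ × ℝ)).comp (ContinuousLinearMap.snd ℝ ℝ (ℝ × ℝ × ℝ))
  set L3 : (ℝ × ℝ × ℝ × ℝ) →L[ℝ] ℝ :=
    ((ContinuousLinearMap.fst ℝ ℝ ℝ).comp (ContinuousLinearMap.snd ℝ ℝ (ℝ × ℝ))).comp
      (ContinuousLinearMap.snd ℝ ℝ (ℝ × ℝ × ℝ))
  set L4 : (ℝ × ℝ × ℝ × ℝ) →L[ℝ] ℝ :=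
    ((ContinuousLinearMap.snd ℝ ℝ ℝ).comp (ContinuousLinearMap.snd ℝ ℝ (ℝ × ℝ))).comp
      (ContinuousLinearMap.snd ℝ ℝ (ℝ × ℝ × ℝ))
  have h1 : HasFDerivAt (fun x : ℝ × ℝ × ℝ × ℝ => x.1) L1 p := L1.hasFDerivAt
  have h3 : HasFDerivAt (fun x : ℝ × ℝ × ℝ × ℝ => x.2.2.1) L3 p := L3.hasFDerivAt
  have hinv : HasFDerivAt (fun x : ℝ × ℝ × ℝ × ℝ => (x.1)⁻¹) ((-(p.1 ^ 2)⁻¹) • L1) p :=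
    (hasDerivAt_inv (by simpa using hr.ne')).comp_hasFDerivAt p h1
  have hdiv : HasFDerivAt (fun x : ℝ × ℝ × ℝ × ℝ => x.2.2.1 * (x.1)⁻¹)
      (p.2.2.1 • ((-(p.1 ^ 2)⁻¹) • L1) + (p.1)⁻¹ • L3) p := h3.mul hinv
  have hg : HasFDerivAt (fun x : ℝ × ℝ × ℝ × ℝ => (x.2.2.1 * (x.1)⁻¹, x.2.1, x.2.2.2))
      ((p.2.2.1 • ((-(p.1 ^ 2)⁻¹) • L1) + (p.1)⁻¹ • L3).prod (L2.prod L4)) p :=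
    HasFDerivAt.prodMk hdiv (HasFDerivAt.prodMk L2.hasFDerivAt L4.hasFDerivAt)
  have hP : HasFDerivAt scalingQuot
      ((p.2.2.1 • ((-(p.1 ^ 2)⁻¹) • L1) + (p.1)⁻¹ • L3).prod (L2.prod L4)) p := by
    unfold scalingQuot
    simp only [div_eq_mul_inv]
    exact hg
  rw [hP.fderiv]
  have hc : cos (θ - θ') = cos (θ - θ') := rfl
  simp only [p, hoVF, contactVF, scalingQuot, ContinuousLinearMap.prod_apply,
    ContinuousLinearMap.add_apply, ContinuousLinearMap.coe_smul', Pi.smul_apply,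
    ContinuousLinearMap.coe_comp', Function.comp_apply, ContinuousLinearMap.coe_fst',
    ContinuousLinearMap.coe_snd', smul_eq_mul, L1, L2, L3, L4]
  refine Prod.ext ?_ (Prod.ext rfl ?_) <;> simp only <;> field_simp <;> ring
end
end

section
/- For all (r, θ, r', θ') ∈ ℝ⁴ with r > 0 and r' > 0, one has fderiv ℝ Q (r, θ, r', θ') (X (r, θ, r', θ')) = X₂ (Q (r, θ, r', θ')), where Q(r, θ, r', θ') = (r, r', θ − θ') is the quotient map of the standard S¹-symmetry and X₂(r, r', α) = (−r' * cos α, r * cos α, (r'/r − r/r') * sin α). That is, the Hamiltonian vector field of the 2d harmonic oscillator projects under the rotational reduction to the Poisson Hamiltonian vector field X_{H^{S¹}} of Example 4.4 of the paper. -/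
open Real

noncomputable section

/-- The quotient map of the standard `S¹`-symmetry: `Q(r, θ, r', θ') = (r, r', θ − θ')`. -/
def rotationQuot (x : ℝ × ℝ × ℝ × ℝ) : ℝ × ℝ × ℝ :=
  (x.1, x.2.2.1, x.2.1 - x.2.2.2)

/-- The reduced Poisson Hamiltonian vector field
`X₂(r, r', α) = (−r' cos α, r cos α, (r'/r − r/r') sin α)`. -/
def poissonVF (y : ℝ × ℝ × ℝ) : ℝ × ℝ × ℝ :=
  (-(y.2.1) * cos y.2.2, y.1 * cos y.2.2, (y.2.1 / y.1 - y.1 / y.2.1) * sin y.2.2)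

/-- `rotationQuot` as a continuous linear map. -/
def rotationQuotL : (ℝ × ℝ × ℝ × ℝ) →L[ℝ] (ℝ × ℝ × ℝ) :=
  (ContinuousLinearMap.fst ℝ ℝ (ℝ × ℝ × ℝ)).prod
    (((ContinuousLinearMap.fst ℝ ℝ ℝ).comp
        ((ContinuousLinearMap.snd ℝ ℝ (ℝ × ℝ)).comp
          (ContinuousLinearMap.snd ℝ ℝ (ℝ × ℝ × ℝ)))).prod
      (((ContinuousLinearMap.fst ℝ ℝ (ℝ × ℝ)).comp
          (ContinuousLinearMap.snd ℝ ℝ (ℝ × ℝ × ℝ))) -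
        ((ContinuousLinearMap.snd ℝ ℝ ℝ).comp
          ((ContinuousLinearMap.snd ℝ ℝ (ℝ × ℝ)).comp
            (ContinuousLinearMap.snd ℝ ℝ (ℝ × ℝ × ℝ))))))

lemma rotationQuot_eq : rotationQuot = rotationQuotL := by
  funext x
  rfl

/-- The Hamiltonian vector field of the 2d harmonic oscillator
projects, under the rotational reduction `Q(r, θ, r', θ') = (r, r', θ − θ')`, to the
Poisson Hamiltonian vector field `X_{H^{S¹}}` of Example 4.4 of the paper. -/
theorem harmonic_oscillator_rotational_reduction (r θ r' θ' : ℝ)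
    (hr : 0 < r) (hr' : 0 < r') :
    fderiv ℝ rotationQuot (r, θ, r', θ') (hoVF (r, θ, r', θ'))
      = poissonVF (rotationQuot (r, θ, r', θ')) := by
  rw [show rotationQuot (r, θ, r', θ') = ((r, r', θ - θ') : ℝ × ℝ × ℝ) from rfl,
    rotationQuot_eq, ContinuousLinearMap.fderiv]
  show ((-(r') * cos (θ - θ'), r * cos (θ - θ'),
      r'/r * sin (θ - θ') - r/r' * sin (θ - θ')) : ℝ × ℝ × ℝ) = _
  simp only [poissonVF]
  refine Prod.ext rfl (Prod.ext rfl ?_)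
  field_simp
end
end

section
/- Define X₃(ρ', σ) = ((1 + ρ'²) * cos σ, ((ρ'² − 1)/ρ') * sin σ) on {ρ' > 0}. Then: (i) for the one-step-scaling-reduced field X₁(ρ', θ, θ') = ((1 + ρ'²) * cos(θ − θ'), ρ' * sin(θ − θ'), sin(θ − θ')/ρ') and the map A(ρ', θ, θ') = (ρ', θ − θ'), one has fderiv ℝ A x (X₁ x) = X₃ (A x) for all x with ρ' > 0; and (ii) for the one-step-rotation-reduced field X₂(r, r', α) = (−r' * cos α, r * cos α, (r'/r − r/r') * sin α) and the map B(r, r', α) = (r'/r, α), one has fderiv ℝ B y (X₂ y) = X₃ (B y) for all y with r > 0 and r' > 0. Hence the two reduction orders (first scaling then rotation, or first rotation then scaling) of the 2d harmonic oscillator produce the same reduced vector field X₃, an instance of the equivalence Theorem 6.1 of the paper. -/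
open Real

noncomputable section

/-- The fully reduced field `X₃(ρ', σ) = ((1 + ρ'²) cos σ, ((ρ'² − 1)/ρ') sin σ)`. -/
def reducedVF (z : ℝ × ℝ) : ℝ × ℝ :=
  ((1 + z.1 ^ 2) * cos z.2, ((z.1 ^ 2 - 1) / z.1) * sin z.2)

/-- The second-step rotational quotient map `A(ρ', θ, θ') = (ρ', θ − θ')`. -/
def quotA (y : ℝ × ℝ × ℝ) : ℝ × ℝ := (y.1, y.2.1 - y.2.2)

/-- The second-step scaling quotient map `B(r, r', α) = (r'/r, α)`. -/
def quotB (y : ℝ × ℝ × ℝ) : ℝ × ℝ := (y.2.1 / y.1, y.2.2)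

def LA : (ℝ × ℝ × ℝ) →L[ℝ] ℝ × ℝ :=
  (ContinuousLinearMap.fst ℝ ℝ (ℝ × ℝ)).prod
    ((ContinuousLinearMap.fst ℝ ℝ ℝ).comp (ContinuousLinearMap.snd ℝ ℝ (ℝ × ℝ)) -
     (ContinuousLinearMap.snd ℝ ℝ ℝ).comp (ContinuousLinearMap.snd ℝ ℝ (ℝ × ℝ)))

/-- The two reduction orders of the 2d harmonic oscillator (first
scaling then rotation, or first rotation then scaling) both produce the reduced vector
field `X₃`: an instance of the equivalence Theorem 6.1 of the paper. -/
theorem harmonic_oscillator_reductions_commute :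
    (∀ x : ℝ × ℝ × ℝ, 0 < x.1 →
      fderiv ℝ quotA x (contactVF x) = reducedVF (quotA x)) ∧
    (∀ y : ℝ × ℝ × ℝ, 0 < y.1 → 0 < y.2.1 →
      fderiv ℝ quotB y (poissonVF y) = reducedVF (quotB y)) := by
  constructor
  · intro x hx
    have hq : quotA = ⇑LA := rfl
    rw [hq, LA.fderiv]
    simp only [LA, contactVF, reducedVF, quotA, ContinuousLinearMap.prod_apply,
      ContinuousLinearMap.coe_fst', ContinuousLinearMap.sub_apply,
      ContinuousLinearMap.coe_comp', Function.comp_apply,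
      ContinuousLinearMap.coe_snd']
    refine Prod.ext rfl ?_
    field_simp
  · intro y hy hy'
    have h1 : HasFDerivAt (fun z : ℝ × ℝ × ℝ => z.2.1)
        ((ContinuousLinearMap.fst ℝ ℝ ℝ).comp (ContinuousLinearMap.snd ℝ ℝ (ℝ × ℝ))) y :=
      (hasFDerivAt_fst.comp y (hasFDerivAt_snd))
    have h2 : HasFDerivAt (fun z : ℝ × ℝ × ℝ => z.1)
        (ContinuousLinearMap.fst ℝ ℝ (ℝ × ℝ)) y := hasFDerivAt_fst
    have hinv : HasFDerivAt (fun z : ℝ × ℝ × ℝ => (z.1)⁻¹)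
        ((-ContinuousLinearMap.mulLeftRight ℝ ℝ (y.1)⁻¹ (y.1)⁻¹).comp
          (ContinuousLinearMap.fst ℝ ℝ (ℝ × ℝ))) y :=
      (hasFDerivAt_inv' (𝕜 := ℝ) (R := ℝ) (ne_of_gt hy)).comp y h2
    have hdiv : HasFDerivAt (fun z : ℝ × ℝ × ℝ => z.2.1 / z.1)
        (y.2.1 • ((-ContinuousLinearMap.mulLeftRight ℝ ℝ (y.1)⁻¹ (y.1)⁻¹).comp
          (ContinuousLinearMap.fst ℝ ℝ (ℝ × ℝ))) +
         (y.1)⁻¹ • ((ContinuousLinearMap.fst ℝ ℝ ℝ).comp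
          (ContinuousLinearMap.snd ℝ ℝ (ℝ × ℝ)))) y := by
      rw [show (fun z : ℝ × ℝ × ℝ => z.2.1 / z.1) = (fun z : ℝ × ℝ × ℝ => z.2.1) *
        (fun z : ℝ × ℝ × ℝ => (z.1)⁻¹) from funext fun z => div_eq_mul_inv _ _]
      exact HasFDerivAt.mul (𝕜 := ℝ) h1 hinv
    have h3 : HasFDerivAt (fun z : ℝ × ℝ × ℝ => z.2.2)
        ((ContinuousLinearMap.snd ℝ ℝ ℝ).comp (ContinuousLinearMap.snd ℝ ℝ (ℝ × ℝ))) y :=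
      (hasFDerivAt_snd.comp y (hasFDerivAt_snd))
    have hB := HasFDerivAt.prodMk hdiv h3
    rw [show quotB = (fun z : ℝ × ℝ × ℝ => (z.2.1 / z.1, z.2.2)) from rfl, hB.fderiv]
    have hne : y.1 ≠ 0 := ne_of_gt hy
    have hne' : y.2.1 ≠ 0 := ne_of_gt hy'
    refine Prod.ext ?_ ?_ <;>
      simp only [poissonVF, reducedVF, ContinuousLinearMap.prod_apply,
        ContinuousLinearMap.add_apply, ContinuousLinearMap.smul_apply,
        ContinuousLinearMap.coe_comp', Function.comp_apply,
        ContinuousLinearMap.coe_fst', ContinuousLinearMap.coe_snd',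
        ContinuousLinearMap.neg_apply, ContinuousLinearMap.mulLeftRight_apply,
        smul_eq_mul] <;>
      field_simp <;> ring
end
end

section
/- Let θ, ρ', θ' : ℝ → ℝ be differentiable with ρ'(t) > 0 for all t, and suppose that for every t: HasDerivAt θ (ρ'(t) * sin(θ(t) − θ'(t))) t, HasDerivAt ρ' ((1 + ρ'(t)²) * cos(θ(t) − θ'(t))) t, and HasDerivAt θ' (sin(θ(t) − θ'(t)) / ρ'(t)) t (i.e. (θ, ρ', θ') is an integral curve of the scaling-reduced harmonic-oscillator field X₁). Let r₀ > 0 and define r(t) = r₀ * Real.sqrt ((1 + ρ'(0)²) / (1 + ρ'(t)²)) and r'(t) = r(t) * ρ'(t). Then for every t: HasDerivAt r (− r'(t) * cos(θ(t) − θ'(t))) t, HasDerivAt (fun t => r t * ρ' t) (r(t) * cos(θ(t) − θ'(t))) t, HasDerivAt θ ((r'(t)/r(t)) * sin(θ(t) − θ'(t))) t, and HasDerivAt θ' ((r(t)/r'(t)) * sin(θ(t) − θ'(t))) t; that is, Γ(t) = (r(t), θ(t), r'(t), θ'(t)) is an integral curve of the Hamiltonian vector field X(r, θ, r', θ') = (−r'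 cos(θ−θ'), (r'/r) sin(θ−θ'), r cos(θ−θ'), (r/r') sin(θ−θ')) of the 2d harmonic oscillator, with r(0) = r₀. This is the reconstruction, from the reduced contact dynamics, of the symplectic dynamics of the 2d harmonic oscillator via its scaling symmetry (Section 7 of the paper). -/
open Real

/-- Reconstruction of the symplectic dynamics of the 2d harmonic
oscillator from the reduced contact dynamics via its scaling symmetry (Section 7 of
the paper): if `(θ, ρ', θ')` is an integral curve of the scaling-reduced field `X₁`,
then `Γ(t) = (r(t), θ(t), r'(t), θ'(t))`, with
`r(t) = r₀ √((1 + ρ'(0)²)/(1 + ρ'(t)²))` and `r'(t) = r(t) ρ'(t)`, is an integral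
curve of the Hamiltonian vector field of the 2d harmonic oscillator with `r(0) = r₀`. -/
theorem harmonic_oscillator_reconstruction
    (θ ρ' θ' : ℝ → ℝ) (hρ'pos : ∀ t, 0 < ρ' t)
    (hθ : ∀ t, HasDerivAt θ (ρ' t * sin (θ t - θ' t)) t)
    (hρ' : ∀ t, HasDerivAt ρ' ((1 + (ρ' t) ^ 2) * cos (θ t - θ' t)) t)
    (hθ' : ∀ t, HasDerivAt θ' (sin (θ t - θ' t) / ρ' t) t)
    (r₀ : ℝ) (hr₀ : 0 < r₀)
    (r r' : ℝ → ℝ)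
    (hr : ∀ t, r t = r₀ * Real.sqrt ((1 + (ρ' 0) ^ 2) / (1 + (ρ' t) ^ 2)))
    (hr' : ∀ t, r' t = r t * ρ' t) :
    r 0 = r₀ ∧
    ∀ t : ℝ,
      HasDerivAt r (- r' t * cos (θ t - θ' t)) t ∧
      HasDerivAt (fun s => r s * ρ' s) (r t * cos (θ t - θ' t)) t ∧
      HasDerivAt θ ((r' t / r t) * sin (θ t - θ' t)) t ∧
      HasDerivAt θ' ((r t / r' t) * sin (θ t - θ' t)) t := by
  have hu : ∀ t, (0:ℝ) < 1 + ρ' t ^ 2 := fun t => by positivity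
  set c := r₀ * Real.sqrt (1 + ρ' 0 ^ 2) with hc
  have hcpos : 0 < c := by
    have := Real.sqrt_pos.mpr (hu 0); positivity
  have hs : ∀ t, 0 < Real.sqrt (1 + ρ' t ^ 2) := fun t => Real.sqrt_pos.mpr (hu t)
  have hrc : ∀ t, r t = c / Real.sqrt (1 + ρ' t ^ 2) := by
    intro t
    rw [hr t, Real.sqrt_div (hu 0).le, hc]; ring
  have hrpos : ∀ t, 0 < r t := fun t => by
    rw [hrc t]; exact div_pos hcpos (hs t)
  have hr0 : r 0 = r₀ := by
    rw [hrc 0, hc, mul_div_assoc, div_self (ne_of_gt (hs 0)), mul_one]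
  have hsd : ∀ t, HasDerivAt (fun t => Real.sqrt (1 + ρ' t ^ 2))
      (1 / (2 * Real.sqrt (1 + ρ' t ^ 2)) *
        (2 * ρ' t * ((1 + ρ' t ^ 2) * cos (θ t - θ' t)))) t := by
    intro t
    have h1 : HasDerivAt (fun t => 1 + ρ' t ^ 2)
        (2 * ρ' t * ((1 + ρ' t ^ 2) * cos (θ t - θ' t))) t := by
      have h2 := ((hρ' t).pow 2).const_add 1
      simpa [mul_comm, mul_assoc, mul_left_comm] using h2
    exact (Real.hasDerivAt_sqrt (ne_of_gt (hu t))).comp t h1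
  have hrd : ∀ t, HasDerivAt r (- r' t * cos (θ t - θ' t)) t := by
    intro t
    have hfun : r = fun t => c / Real.sqrt (1 + ρ' t ^ 2) := funext hrc
    rw [hfun]
    have hd := (hasDerivAt_const t c).div (hsd t) (ne_of_gt (hs t))
    refine hd.congr_deriv ?_; symm
    have hsq : Real.sqrt (1 + ρ' t ^ 2) ^ 2 = 1 + ρ' t ^ 2 := Real.sq_sqrt (hu t).le
    rw [hr' t, hrc t]
    field_simp
    rw [hsq]
    nlinarith [hs t, hsq, cos_sq_le_one (θ t - θ' t)]
  refine ⟨hr0, fun t => ⟨hrd t, ?_, ?_, ?_⟩⟩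
  · have hd := (hrd t).mul (hρ' t)
    refine hd.congr_deriv ?_; symm
    rw [hr' t]; ring
  · convert hθ t using 1
    rw [hr' t]
    field_simp [ne_of_gt (hrpos t)]
  · convert hθ' t using 1
    rw [hr' t]
    field_simp [ne_of_gt (hrpos t), ne_of_gt (hρ'pos t)]
end
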